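/- arXiv:math/0407322 — 2 statements merged into one kernel-verified Lean document; each statement's English description precedes it below -/
import Mathlib

section
/- Assume condition (exp). Then there exists N > 0 such that for all n ≥ N: σ_{n+1} < σ_n (hence δ_{n+1} < δ_n), B_n² ≤ B_{n+1}², and ρ_l(n) ≤ ρ_l(n+1) for every integer l ≥ 3. -/
open Finset Filter

/-- The number of multisets of total size `n` determined by the parameters `a j`
(the number of one-component multisets of size `j`), i.e.
`c_n = Σ_{η ∈ Ω_n} Π_{j=1}^n C(a_j + η_j - 1, η_j)` where
`Ω_n = {η : Σ_{j=1}^n j·η_j = n}` (indices shifted: `j ∈ Fin n` stands for `j+1`). -/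
def multisetCount (a : ℕ → ℕ) (n : ℕ) : ℕ :=
  ∑ η : Fin n → Fin (n + 1),
    if ∑ j : Fin n, (j.1 + 1) * (η j).1 = n then
      ∏ j : Fin n, Nat.choose (a (j.1 + 1) + (η j).1 - 1) (η j).1
    else 0

/-- `M_n(σ) = Σ_{j=1}^n j a_j e^{-jσ}/(1-e^{-jσ})`. -/
noncomputable def Mfun (a : ℕ → ℕ) (n : ℕ) (σ : ℝ) : ℝ :=
  ∑ j ∈ Finset.Icc 1 n, (j : ℝ) * (a j) * Real.exp (-(j * σ)) / (1 - Real.exp (-(j * σ)))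

/-- `B_n²(σ) = Σ_{j=1}^n j² a_j e^{-jσ}/(1-e^{-jσ})²`. -/
noncomputable def B2 (a : ℕ → ℕ) (n : ℕ) (σ : ℝ) : ℝ :=
  ∑ j ∈ Finset.Icc 1 n, (j : ℝ) ^ 2 * (a j) * Real.exp (-(j * σ)) / (1 - Real.exp (-(j * σ))) ^ 2

/-- `ρ_l(n, σ) = Σ_{j=1}^n j^l a_j Σ_{k≥1} k^{l-1} e^{-jkσ}`. -/
noncomputable def rho (a : ℕ → ℕ) (l n : ℕ) (σ : ℝ) : ℝ :=
  ∑ j ∈ Finset.Icc 1 n, (j : ℝ) ^ l * (a j) *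
    ∑' k : ℕ, ((k : ℝ) + 1) ^ (l - 1) * Real.exp (-((j : ℝ) * ((k : ℝ) + 1) * σ))

/-- Condition (exp): `a_j ≍ j^{r-1} y^j`, i.e. there are constants `D₁, D₂ > 0` with
`D₁ j^{r-1} y^j ≤ a_j ≤ D₂ j^{r-1} y^j` for all `j ≥ 1`. -/
def ExpansiveCond (a : ℕ → ℕ) (r y : ℝ) : Prop :=
  ∃ D₁ D₂ : ℝ, 0 < D₁ ∧ 0 < D₂ ∧ ∀ j : ℕ, 1 ≤ j →
    D₁ * (j : ℝ) ^ (r - 1) * y ^ j ≤ (a j : ℝ) ∧ (a j : ℝ) ≤ D₂ * (j : ℝ) ^ (r - 1) * y ^ j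

/- ### Auxiliary lemmas -/

private lemma frac_lt_frac {x X : ℝ} (hx : 0 < x) (hxX : x < X) (hX : X < 1) :
    x / (1 - x) < X / (1 - X) := by
  have h1 : 0 < 1 - X := by linarith
  have h2 : 0 < 1 - x := by linarith
  rw [div_lt_div_iff₀ h2 h1]
  nlinarith

/-- `M_n` is strictly decreasing on `(0,∞)` (when all `a_j ≥ 1`). -/
private lemma Mfun_anti (a : ℕ → ℕ) (ha : ∀ j, 1 ≤ j → 1 ≤ a j) (n : ℕ) (hn : 1 ≤ n)
    {s t : ℝ} (hs : 0 < s) (hst : s < t) : Mfun a n t < Mfun a n s := by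
  unfold Mfun
  apply Finset.sum_lt_sum_of_nonempty
  · exact ⟨1, by simp [hn]⟩
  intro j hj
  rw [Finset.mem_Icc] at hj
  have hj1 : (1:ℝ) ≤ (j:ℝ) := by exact_mod_cast hj.1
  have hja : (1:ℝ) ≤ (a j : ℝ) := by exact_mod_cast ha j hj.1
  have e1 : Real.exp (-((j:ℝ)*t)) < Real.exp (-((j:ℝ)*s)) := by
    apply Real.exp_lt_exp.2; nlinarith
  have e2 : Real.exp (-((j:ℝ)*s)) < 1 := by
    rw [Real.exp_lt_one_iff]; nlinarith
  have e0 : 0 < Real.exp (-((j:ℝ)*t)) := Real.exp_pos _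
  rw [mul_div_assoc, mul_div_assoc]
  exact mul_lt_mul_of_pos_left (frac_lt_frac e0 e1 e2) (by nlinarith)

private lemma ypow_mul_exp {y : ℝ} (hy : 0 < y) (j : ℕ) (σ : ℝ) :
    y ^ j * Real.exp (-((j:ℝ) * σ)) = Real.exp (-((j:ℝ) * (σ - Real.log y))) := by
  have h1 : y ^ j = Real.exp ((j:ℝ) * Real.log y) := by
    rw [Real.exp_nat_mul, Real.exp_log hy]
  rw [h1, ← Real.exp_add]
  congr 1
  ring

/-- `Σ_{j=1}^m j^r ≥ (m/2)^(r+1)`. -/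
private lemma sum_rpow_lower (r : ℝ) (hr : 0 < r) (m : ℕ) (hm : 1 ≤ m) :
    ((m:ℝ)/2) ^ (r+1) ≤ ∑ j ∈ Finset.Icc 1 m, (j:ℝ) ^ r := by
  have hm1 : (1:ℝ) ≤ (m:ℝ) := by exact_mod_cast hm
  set k := m / 2 with hk
  have hsub : Finset.Icc (k+1) m ⊆ Finset.Icc 1 m := Finset.Icc_subset_Icc (by omega) le_rfl
  have h1 : ∑ j ∈ Finset.Icc (k+1) m, (j:ℝ)^r ≤ ∑ j ∈ Finset.Icc 1 m, (j:ℝ)^r := by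
    apply Finset.sum_le_sum_of_subset_of_nonneg hsub
    intro j _ _
    exact Real.rpow_nonneg (Nat.cast_nonneg j) r
  have hcard : (Finset.Icc (k+1) m).card = m - k := by rw [Nat.card_Icc]; omega
  have hmin : ∀ j ∈ Finset.Icc (k+1) m, ((m:ℝ)/2) ^ r ≤ (j:ℝ)^r := by
    intro j hj
    rw [Finset.mem_Icc] at hj
    apply Real.rpow_le_rpow (by positivity) _ hr.le
    have h2 : m < (k+1)*2 := by omega
    have hj' : ((k:ℝ)+1) ≤ (j:ℝ) := by exact_mod_cast hj.1
    have h3 : (m:ℝ) < ((k:ℝ)+1)*2 := by exact_mod_cast h2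
    linarith
  have h2 : ((m - k : ℕ):ℝ) * ((m:ℝ)/2)^r ≤ ∑ j ∈ Finset.Icc (k+1) m, (j:ℝ)^r := by
    have := Finset.card_nsmul_le_sum (Finset.Icc (k+1) m) (fun j => (j:ℝ)^r) (((m:ℝ)/2)^r) hmin
    rwa [hcard, nsmul_eq_mul] at this
  have hcnt : (m:ℝ)/2 ≤ ((m - k:ℕ):ℝ) := by
    have hkm : k ≤ m := by omega
    have h2k : (2*k : ℕ) ≤ m := by omega
    have hc1 : ((m - k:ℕ):ℝ) = (m:ℝ) - (k:ℝ) := by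
      push_cast [hkm]; ring
    have hc2 : 2*(k:ℝ) ≤ (m:ℝ) := by exact_mod_cast h2k
    rw [hc1]; linarith
  have hfin : ((m:ℝ)/2)^(r+1) ≤ ((m-k:ℕ):ℝ) * ((m:ℝ)/2)^r := by
    rw [Real.rpow_add_one (by positivity : ((m:ℝ)/2) ≠ 0)]
    have hp : 0 ≤ ((m:ℝ)/2)^r := Real.rpow_nonneg (by positivity) r
    nlinarith
  linarith

/-- Key lower bound: if `m ≤ n` and `m·δ ≤ 1`, then `n ≥ D₁ e⁻¹ (m/2)^(r+1)`. -/
private lemma core_ineq (a : ℕ → ℕ) (r y D₁ : ℝ) (hr : 0 < r) (hy : 1 ≤ y) (hD₁ : 0 < D₁)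
    (hlow : ∀ j : ℕ, 1 ≤ j → D₁ * (j : ℝ) ^ (r - 1) * y ^ j ≤ (a j : ℝ))
    (n m : ℕ) (hm1 : 1 ≤ m) (hmn : m ≤ n) (σ : ℝ) (hσ : 0 < σ)
    (hδ : (m:ℝ) * (σ - Real.log y) ≤ 1)
    (hM : Mfun a n σ = n) :
    D₁ * Real.exp (-1) * ((m:ℝ)/2)^(r+1) ≤ (n:ℝ) := by
  have hy0 : (0:ℝ) < y := lt_of_lt_of_le one_pos hy
  have key : ∀ j ∈ Finset.Icc 1 m,
      D₁ * Real.exp (-1) * (j:ℝ)^r ≤ (j:ℝ) * (a j) * Real.exp (-((j:ℝ)*σ)) := by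
    intro j hj
    rw [Finset.mem_Icc] at hj
    have hj1 : (1:ℝ) ≤ (j:ℝ) := by exact_mod_cast hj.1
    have hjm : (j:ℝ) ≤ (m:ℝ) := by exact_mod_cast hj.2
    have hjδ : (j:ℝ)*(σ - Real.log y) ≤ 1 := by
      rcases le_or_gt 0 (σ - Real.log y) with h|h
      · nlinarith
      · nlinarith
    have e1 : Real.exp (-1) ≤ Real.exp (-((j:ℝ)*(σ - Real.log y))) :=
      Real.exp_le_exp.2 (by linarith)
    have e2 : y^j * Real.exp (-((j:ℝ)*σ)) = Real.exp (-((j:ℝ)*(σ - Real.log y))) :=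
      ypow_mul_exp hy0 j σ
    have hjr : (j:ℝ)^r = (j:ℝ) * (j:ℝ)^(r-1) := by
      rw [show r = 1 + (r-1) by ring, Real.rpow_add (by linarith : (0:ℝ) < (j:ℝ)),
        Real.rpow_one]
      ring_nf
    have hrnn : (0:ℝ) ≤ (j:ℝ)^r := Real.rpow_nonneg (by linarith) r
    calc D₁ * Real.exp (-1) * (j:ℝ)^r
        ≤ D₁ * Real.exp (-((j:ℝ)*(σ - Real.log y))) * (j:ℝ)^r := by gcongr
      _ = (j:ℝ) * (D₁ * (j:ℝ)^(r-1) * y^j) * Real.exp (-((j:ℝ)*σ)) := by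
          rw [← e2, hjr]; ring
      _ ≤ (j:ℝ) * (a j) * Real.exp (-((j:ℝ)*σ)) := by
          have h1 := hlow j hj.1
          have h3 : (0:ℝ) ≤ (j:ℝ) := by linarith
          gcongr
  calc D₁ * Real.exp (-1) * ((m:ℝ)/2)^(r+1)
      ≤ D₁ * Real.exp (-1) * ∑ j ∈ Finset.Icc 1 m, (j:ℝ)^r := by
        have := sum_rpow_lower r hr m hm1
        have hpos : (0:ℝ) < D₁ * Real.exp (-1) := by positivity
        nlinarith
    _ = ∑ j ∈ Finset.Icc 1 m, D₁ * Real.exp (-1) * (j:ℝ)^r := by rw [Finset.mul_sum]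
    _ ≤ ∑ j ∈ Finset.Icc 1 m, (j:ℝ)*(a j)*Real.exp (-((j:ℝ)*σ)) := Finset.sum_le_sum key
    _ ≤ ∑ j ∈ Finset.Icc 1 n, (j:ℝ)*(a j)*Real.exp (-((j:ℝ)*σ)) := by
        apply Finset.sum_le_sum_of_subset_of_nonneg (Finset.Icc_subset_Icc le_rfl hmn)
        intro j _ _
        positivity
    _ ≤ Mfun a n σ := by
        unfold Mfun
        apply Finset.sum_le_sum
        intro j hj
        rw [Finset.mem_Icc] at hj
        have hj1 : (1:ℝ) ≤ (j:ℝ) := by exact_mod_cast hj.1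
        have he1 : Real.exp (-((j:ℝ)*σ)) < 1 := by
          rw [Real.exp_lt_one_iff]; nlinarith
        have hnum : (0:ℝ) ≤ (j:ℝ)*(a j)*Real.exp (-((j:ℝ)*σ)) := by positivity
        rw [le_div_iff₀ (by linarith : (0:ℝ) < 1 - Real.exp (-((j:ℝ)*σ)))]
        nlinarith [Real.exp_pos (-((j:ℝ)*σ))]
    _ = (n:ℝ) := hM

private lemma B2_mono (a : ℕ → ℕ) (n : ℕ) {s t : ℝ} (ht : 0 < t) (hts : t ≤ s) :
    B2 a n s ≤ B2 a (n+1) t := by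
  unfold B2
  rw [Finset.sum_Icc_succ_top (by omega : 1 ≤ n+1)]
  have hlast : (0:ℝ) ≤ ((n+1:ℕ):ℝ)^2 * (a (n+1)) * Real.exp (-(((n+1:ℕ):ℝ) * t)) /
      (1 - Real.exp (-(((n+1:ℕ):ℝ) * t)))^2 := by positivity
  refine le_trans (Finset.sum_le_sum ?_) (le_add_of_nonneg_right hlast)
  intro j hj
  rw [Finset.mem_Icc] at hj
  have hj1 : (1:ℝ) ≤ (j:ℝ) := by exact_mod_cast hj.1
  have he_t : Real.exp (-((j:ℝ)*t)) < 1 := by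
    rw [Real.exp_lt_one_iff]; nlinarith
  have he_st : Real.exp (-((j:ℝ)*s)) ≤ Real.exp (-((j:ℝ)*t)) :=
    Real.exp_le_exp.2 (by nlinarith)
  have hd : (0:ℝ) < (1 - Real.exp (-((j:ℝ)*t)))^2 := by
    have : (0:ℝ) < 1 - Real.exp (-((j:ℝ)*t)) := by linarith
    positivity
  apply div_le_div₀ (by positivity) ?_ hd ?_
  · have : (0:ℝ) ≤ (j:ℝ)^2 * (a j) := by positivity
    nlinarith
  · apply pow_le_pow_left₀ (by linarith)
    have := Real.exp_pos (-((j:ℝ)*s))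
    linarith

private lemma rho_summable (l j : ℕ) (hj : 1 ≤ j) {t : ℝ} (ht : 0 < t) :
    Summable (fun k : ℕ => ((k:ℝ)+1)^(l-1) * Real.exp (-((j:ℝ) * ((k:ℝ)+1) * t))) := by
  have hj1 : (1:ℝ) ≤ (j:ℝ) := by exact_mod_cast hj
  have hq : ‖Real.exp (-((j:ℝ)*t))‖ < 1 := by
    rw [Real.norm_eq_abs, abs_of_pos (Real.exp_pos _), Real.exp_lt_one_iff]
    nlinarith
  have h := summable_pow_mul_geometric_of_norm_lt_one (l-1) hq
  have h2 := (summable_nat_add_iff 1).2 h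
  refine h2.congr fun k => ?_
  have he : Real.exp (-((j:ℝ)*t)) ^ (k+1) = Real.exp (-((j:ℝ)*((k:ℝ)+1)*t)) := by
    rw [← Real.exp_nat_mul]
    congr 1
    push_cast
    ring
  rw [he]
  push_cast
  ring

private lemma rho_mono (a : ℕ → ℕ) (l n : ℕ) {s t : ℝ} (ht : 0 < t) (hts : t ≤ s) :
    rho a l n s ≤ rho a l (n+1) t := by
  unfold rho
  rw [Finset.sum_Icc_succ_top (by omega : 1 ≤ n+1)]
  have hs : 0 < s := lt_of_lt_of_le ht hts
  refine le_trans (Finset.sum_le_sum ?_) (le_add_of_nonneg_right ?_)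
  · intro j hj
    rw [Finset.mem_Icc] at hj
    have hj1 : (1:ℝ) ≤ (j:ℝ) := by exact_mod_cast hj.1
    have h1 := rho_summable l j hj.1 hs
    have h2 := rho_summable l j hj.1 ht
    have hco : (0:ℝ) ≤ (j:ℝ)^l * (a j) := by positivity
    apply mul_le_mul_of_nonneg_left _ hco
    apply Summable.tsum_le_tsum _ h1 h2
    intro k
    apply mul_le_mul_of_nonneg_left _ (by positivity)
    apply Real.exp_le_exp.2
    have hk : (0:ℝ) < (j:ℝ)*((k:ℝ)+1) := by positivity
    nlinarith
  · have h0 : ∀ k : ℕ, (0:ℝ) ≤ ((k:ℝ)+1)^(l-1) *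
        Real.exp (-(((n+1:ℕ):ℝ) * ((k:ℝ)+1) * t)) := by
      intro k; positivity
    have := tsum_nonneg (L := SummationFilter.unconditional ℕ) h0
    positivity

/- ### Main theorem -/

set_option maxHeartbeats 1000000 in
/-- under condition (exp), there is `N > 0` such that for all `n ≥ N`:
`σ_{n+1} < σ_n` (hence `δ_{n+1} < δ_n`), `B_n² ≤ B_{n+1}²`, and
`ρ_l(n) ≤ ρ_l(n+1)` for every integer `l ≥ 3`. -/
theorem eventual_monotonicity (a : ℕ → ℕ) (r y : ℝ) (hr : 0 < r) (hy : 1 ≤ y)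
    (hexp : ExpansiveCond a r y)
    (σ : ℕ → ℝ) (hσ : ∀ n : ℕ, 1 ≤ n → 0 < σ n ∧ Mfun a n (σ n) = n) :
    ∃ N : ℕ, 0 < N ∧ ∀ n ≥ N,
      σ (n + 1) < σ n ∧
      (σ (n + 1) - Real.log y < σ n - Real.log y) ∧
      B2 a n (σ n) ≤ B2 a (n + 1) (σ (n + 1)) ∧
      ∀ l : ℕ, 3 ≤ l → rho a l n (σ n) ≤ rho a l (n + 1) (σ (n + 1)) := by
  obtain ⟨D₁, D₂, hD₁, hD₂, hbd⟩ := hexp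
  have hy0 : (0:ℝ) < y := lt_of_lt_of_le one_pos hy
  have hlogy : 0 ≤ Real.log y := Real.log_nonneg hy
  -- all a_j ≥ 1
  have ha : ∀ j, 1 ≤ j → 1 ≤ a j := by
    intro j hj
    have h1 := (hbd j hj).1
    have hp : (0:ℝ) < D₁ * (j:ℝ)^(r-1) * y^j := by
      have : (0:ℝ) < (j:ℝ) := by exact_mod_cast hj
      positivity
    have : (0:ℝ) < (a j : ℝ) := lt_of_lt_of_le hp h1
    exact_mod_cast Nat.one_le_cast.2 (Nat.pos_of_ne_zero (by
      intro h; rw [h] at this; norm_num at this))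
  -- constants
  set K : ℝ := D₁ * Real.exp (-1) / (2:ℝ)^(r+1) with hK_def
  have hK : 0 < K := by
    have : (0:ℝ) < (2:ℝ)^(r+1) := Real.rpow_pos_of_pos two_pos _
    positivity
  set s : ℝ := (r+1)⁻¹ with hs_def
  have hr1 : (0:ℝ) < r + 1 := by linarith
  have hs : 0 < s := by positivity
  have hs1 : s < 1 := by
    rw [hs_def]
    rw [inv_lt_one_iff₀]
    right; linarith
  have hrs : (r+1) * s = 1 := mul_inv_cancel₀ (ne_of_gt hr1)
  set c : ℝ := K^s / 2 with hc_def
  have hc : 0 < c := by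
    have : (0:ℝ) < K^s := Real.rpow_pos_of_pos hK s
    positivity
  clear_value K s c
  -- the eventual real-variable facts
  have hEv : ∀ᶠ x : ℝ in atTop,
      (((x/K) ^ s < x) ∧
       (Real.log (4*(D₂+1)) + r * Real.log (x+1) ≤ x / ((x/K)^s + 1)) ∧ (1 ≤ x)) := by
    have hA : ∀ᶠ x : ℝ in atTop, (x/K)^s < x := by
      filter_upwards [(tendsto_rpow_atTop hr).eventually_ge_atTop (2/K),
        eventually_gt_atTop 0] with x h1 hx0
      have h2 : 2 ≤ K * x^r := by
        rw [div_le_iff₀ hK] at h1; linarith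
      have h3 : x/K ≤ x^(r+1)/2 := by
        rw [div_le_div_iff₀ hK two_pos, Real.rpow_add_one hx0.ne' r]
        nlinarith [Real.rpow_nonneg hx0.le r]
      calc (x/K)^s ≤ (x^(r+1)/2)^s :=
            Real.rpow_le_rpow (div_nonneg hx0.le hK.le) h3 hs.le
        _ = (x^(r+1))^s / 2^s := Real.div_rpow (Real.rpow_nonneg hx0.le _) (by norm_num) s
        _ = x / 2^s := by rw [← Real.rpow_mul hx0.le, hrs, Real.rpow_one]
        _ < x := by
            apply div_lt_self hx0
            rw [show (1:ℝ) = (1:ℝ)^s by rw [Real.one_rpow]]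
            exact Real.rpow_lt_rpow (by norm_num) one_lt_two hs |>.trans_le le_rfl
    have hB : ∀ᶠ x : ℝ in atTop,
        Real.log (4*(D₂+1)) + r * Real.log (x+1) ≤ x / ((x/K)^s + 1) := by
      have hlo := isLittleO_log_rpow_atTop (show (0:ℝ) < 1 - s by linarith)
      have hε : (0:ℝ) < c / (4*(r+1)) := by positivity
      have hlog := hlo.bound hε
      have hC : ∀ᶠ x : ℝ in atTop, Real.log (4*(D₂+1)) ≤ (c/2) * x^(1-s) := by
        have ht : Tendsto (fun x : ℝ => (c/2) * x^(1-s)) atTop atTop := by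
          apply Tendsto.const_mul_atTop (by positivity)
          exact tendsto_rpow_atTop (by linarith)
        exact ht.eventually_ge_atTop _
      filter_upwards [hlog, hC, eventually_ge_atTop (max K 2)] with x hx1 hx2 hx3
      have hxK : K ≤ x := le_trans (le_max_left _ _) hx3
      have hx2' : (2:ℝ) ≤ x := le_trans (le_max_right _ _) hx3
      have hx0 : (0:ℝ) < x := by linarith
      have hxlog : 0 ≤ Real.log x := Real.log_nonneg (by linarith)
      -- log(x+1) ≤ 2 log x
      have hlx1 : Real.log (x+1) ≤ 2 * Real.log x := by
        have h1 : x + 1 ≤ x^2 := by nlinarith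
        have h2 : Real.log (x+1) ≤ Real.log (x^2) :=
          Real.log_le_log (by linarith) h1
        rwa [Real.log_pow, Nat.cast_ofNat] at h2
      -- from little-o: log x ≤ (c/(4(r+1))) x^{1-s}
      have hlx2 : Real.log x ≤ (c/(4*(r+1))) * x^(1-s) := by
        have := hx1
        rw [Real.norm_eq_abs, Real.norm_eq_abs, abs_of_nonneg hxlog,
          abs_of_nonneg (Real.rpow_nonneg hx0.le _)] at this
        exact this
      have hxp : 0 ≤ x^(1-s) := Real.rpow_nonneg hx0.le _
      have hsum : Real.log (4*(D₂+1)) + r * Real.log (x+1) ≤ c * x^(1-s) := by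
        have h4 : r * Real.log (x+1) ≤ 2*r*Real.log x := by nlinarith [Real.log_nonneg (show (1:ℝ) ≤ x+1 by linarith)]
        have h5 : 2*r*Real.log x ≤ 2*r*((c/(4*(r+1))) * x^(1-s)) := by nlinarith
        have h6 : 2*r*((c/(4*(r+1))) * x^(1-s)) ≤ (c/2) * x^(1-s) := by
          rw [show 2*r*((c/(4*(r+1))) * x^(1-s)) = (2*r/(4*(r+1))) * (c * x^(1-s)) by ring]
          have h7 : 2*r/(4*(r+1)) ≤ 1/2 := by
            rw [div_le_div_iff₀ (by linarith) two_pos]; linarith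
          nlinarith [mul_nonneg hc.le hxp]
        linarith
      -- and c x^{1-s} ≤ x/((x/K)^s+1)
      have hxKs : (1:ℝ) ≤ (x/K)^s := by
        rw [show (1:ℝ) = (1:ℝ)^s by rw [Real.one_rpow]]
        exact Real.rpow_le_rpow (by norm_num) ((one_le_div hK).2 hxK) hs.le
      have hden : (x/K)^s + 1 ≤ 2*(x/K)^s := by linarith
      have hdenpos : (0:ℝ) < (x/K)^s + 1 := by linarith
      have heq : c * x^(1-s) = x / (2*(x/K)^s) := by
        have hxs : (0:ℝ) < x^s := Real.rpow_pos_of_pos hx0 s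
        have hKs : (0:ℝ) < K^s := Real.rpow_pos_of_pos hK s
        rw [Real.div_rpow hx0.le hK.le, Real.rpow_sub hx0, Real.rpow_one, hc_def]
        field_simp
      have hfin : x / ((x/K)^s + 1) ≥ x / (2*(x/K)^s) := by
        apply div_le_div_of_nonneg_left hx0.le (by linarith) hden
      linarith [heq ▸ hfin]
    filter_upwards [hA, hB, eventually_ge_atTop (1:ℝ)] with x h1 h2 h3
    exact ⟨h1, h2, h3⟩
  -- pull back to ℕ
  have hEvN := (tendsto_natCast_atTop_atTop (R := ℝ)).eventually hEv
  rw [eventually_atTop] at hEvN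
  obtain ⟨N₀, hN₀⟩ := hEvN
  refine ⟨max N₀ 1, by positivity, ?_⟩
  intro n hn
  have hn1 : 1 ≤ n := le_trans (le_max_right _ _) hn
  have hnN₀ : N₀ ≤ n := le_trans (le_max_left _ _) hn
  obtain ⟨hA, hB, hx1⟩ := hN₀ n hnN₀
  obtain ⟨hσn, hMn⟩ := hσ n hn1
  obtain ⟨hσn1, hMn1⟩ := hσ (n+1) (by omega)
  set δ : ℝ := σ n - Real.log y with hδ_def
  set q : ℝ := ((n:ℝ)/K)^s with hq_def
  have hq0 : 0 ≤ q := by rw [hq_def]; exact Real.rpow_nonneg (by positivity) s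
  clear_value q
  have hδσ : δ ≤ σ n := by rw [hδ_def]; linarith
  clear_value δ
  -- m₀ = ⌊q⌋ + 1 ≤ n
  set m₀ : ℕ := Nat.floor q + 1 with hm₀_def
  have hm₀n : m₀ ≤ n := by
    have : Nat.floor q < n := (Nat.floor_lt hq0).2 hA
    omega
  have hm₀1 : 1 ≤ m₀ := by omega
  have hm₀q : q < (m₀:ℝ) := by
    rw [hm₀_def]
    push_cast
    exact Nat.lt_floor_add_one q
  -- δ > 1/m₀
  have hδm : 1 < (m₀:ℝ) * δ := by
    by_contra h
    push_neg at h
    rw [hδ_def] at h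
    have hcore := core_ineq a r y D₁ hr hy hD₁ (fun j hj => (hbd j hj).1)
      n m₀ hm₀1 hm₀n (σ n) hσn h hMn
    -- so K m₀^{r+1} ≤ n, hence m₀ ≤ q
    have h2 : ((m₀:ℝ)/2)^(r+1) = (m₀:ℝ)^(r+1) / (2:ℝ)^(r+1) :=
      Real.div_rpow (by positivity) (by norm_num) _
    have h2pos : (0:ℝ) < (2:ℝ)^(r+1) := Real.rpow_pos_of_pos two_pos _
    have h3 : K * (m₀:ℝ)^(r+1) ≤ (n:ℝ) := by
      rw [hK_def]
      calc D₁ * Real.exp (-1) / (2:ℝ)^(r+1) * (m₀:ℝ)^(r+1)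
          = D₁ * Real.exp (-1) * ((m₀:ℝ)^(r+1) / (2:ℝ)^(r+1)) := by ring
        _ = D₁ * Real.exp (-1) * ((m₀:ℝ)/2)^(r+1) := by rw [h2]
        _ ≤ (n:ℝ) := hcore
    have h4 : (m₀:ℝ)^(r+1) ≤ (n:ℝ)/K := by
      rw [le_div_iff₀ hK]; linarith
    have h5 : (m₀:ℝ) ≤ q := by
      rw [hq_def]
      have h6 := Real.rpow_le_rpow (Real.rpow_nonneg (by positivity) _) h4 hs.le
      rwa [← Real.rpow_mul (by positivity : (0:ℝ) ≤ (m₀:ℝ)), hrs, Real.rpow_one] at h6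
    linarith
  have hm₀pos : (0:ℝ) < (m₀:ℝ) := by exact_mod_cast hm₀1
  have hδpos : 0 < δ := by
    by_contra h
    push_neg at h
    have h2 : (m₀:ℝ)*δ ≤ 0 := mul_nonpos_of_nonneg_of_nonpos hm₀pos.le h
    linarith
  -- n δ ≥ log(4(D₂+1)) + r log(n+1)
  have hnδ : Real.log (4*(D₂+1)) + r * Real.log ((n:ℝ)+1) ≤ (n:ℝ) * δ := by
    have h1 : (n:ℝ)/(q+1) ≤ (n:ℝ)/(m₀:ℝ) := by
      apply div_le_div_of_nonneg_left (by positivity) hm₀pos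
      have : ((Nat.floor q : ℕ):ℝ) ≤ q := Nat.floor_le hq0
      rw [hm₀_def]; push_cast; linarith
    have h2 : (n:ℝ)/(m₀:ℝ) ≤ (n:ℝ) * δ := by
      rw [div_le_iff₀ hm₀pos]
      have hn0 : (0:ℝ) ≤ (n:ℝ) := by positivity
      have h3 := mul_le_mul_of_nonneg_left hδm.le hn0
      nlinarith [h3]
    calc Real.log (4*(D₂+1)) + r * Real.log ((n:ℝ)+1) ≤ (n:ℝ)/(q+1) := hB
      _ ≤ (n:ℝ)/(m₀:ℝ) := h1
      _ ≤ (n:ℝ) * δ := h2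
  -- the big constant G
  set G : ℝ := 4*(D₂+1)*((n:ℝ)+1)^r with hG_def
  clear_value G
  have hn1r : (0:ℝ) < (n:ℝ)+1 := by positivity
  have hGpos : 0 < G := by
    rw [hG_def]
    have : (0:ℝ) < ((n:ℝ)+1)^r := Real.rpow_pos_of_pos hn1r r
    positivity
  have hG4 : 4 ≤ G := by
    rw [hG_def]
    have h1 : (1:ℝ) ≤ ((n:ℝ)+1)^r := by
      have := Real.rpow_le_rpow_of_exponent_le (show (1:ℝ) ≤ (n:ℝ)+1 by linarith)
        (show (0:ℝ) ≤ r from hr.le)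
      rwa [Real.rpow_zero] at this
    calc (4:ℝ) = 4*1*1 := by norm_num
      _ ≤ 4*(D₂+1)*((n:ℝ)+1)^r := by
          apply mul_le_mul (by linarith) h1 (by norm_num) (by positivity)
  have hlogG : Real.log G ≤ (n:ℝ) * δ := by
    rw [hG_def, Real.log_mul (by positivity) (ne_of_gt (Real.rpow_pos_of_pos hn1r r)),
      Real.log_rpow hn1r]
    linarith [hnδ]
  -- exp(-(n δ)) ≤ 1/G
  have hexpnδ : Real.exp (-((n:ℝ)*δ)) ≤ 1/G := by
    calc Real.exp (-((n:ℝ)*δ)) ≤ Real.exp (-(Real.log G)) :=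
          Real.exp_le_exp.2 (by linarith)
      _ = 1/G := by rw [Real.exp_neg, Real.exp_log hGpos, one_div]
  -- the tail term of M_{n+1} at σ_n
  set e : ℝ := Real.exp (-(((n+1:ℕ):ℝ) * σ n)) with he_def
  have he_pos : 0 < e := by rw [he_def]; exact Real.exp_pos _
  clear_value e
  have he_nδ : e ≤ Real.exp (-((n:ℝ)*δ)) := by
    rw [he_def]
    apply Real.exp_le_exp.2
    have h1 : (n:ℝ)*δ ≤ ((n+1:ℕ):ℝ) * σ n := by
      push_cast
      linarith [mul_le_mul_of_nonneg_left hδσ (show (0:ℝ) ≤ (n:ℝ) by positivity), hσn.le]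
    linarith
  have he_G : e ≤ 1/G := le_trans he_nδ hexpnδ
  have he_half : e ≤ 1/4 := by
    have : 1/G ≤ 1/4 := by
      apply div_le_div_of_nonneg_left (by norm_num) (by norm_num) hG4
    linarith
  -- bound on the extra term E
  set E : ℝ := ((n+1:ℕ):ℝ) * (a (n+1)) * e / (1 - e) with hE_def
  have hMsplit : Mfun a (n+1) (σ n) = Mfun a n (σ n) + E := by
    unfold Mfun
    rw [Finset.sum_Icc_succ_top (by omega : 1 ≤ n+1), hE_def, he_def]
  clear_value E
  have hE_lt_one : E < 1 ∧ 0 ≤ E := by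
    have h1e : (0:ℝ) < 1 - e := by linarith
    constructor
    · -- E ≤ 2 * (n+1) a_{n+1} e ≤ 2 D₂ (n+1)^r exp(-(n+1)δ) ≤ 2 D₂/G*(n+1)^r < 1
      have hup := (hbd (n+1) (by omega)).2
      have hX : ((n+1:ℕ):ℝ) * (a (n+1)) * e ≤ D₂ * ((n:ℝ)+1)^r * (y^(n+1) * e) := by
        have h2 : ((n+1:ℕ):ℝ) * (D₂ * ((n+1:ℕ):ℝ)^(r-1)) = D₂ * ((n:ℝ)+1)^r := by
          push_cast
          rw [show r = 1 + (r-1) by ring, Real.rpow_add hn1r, Real.rpow_one]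
          ring_nf
        calc ((n+1:ℕ):ℝ) * (a (n+1)) * e
            ≤ ((n+1:ℕ):ℝ) * (D₂ * ((n+1:ℕ):ℝ)^(r-1) * y^(n+1)) * e := by
              refine mul_le_mul_of_nonneg_right ?_ he_pos.le
              exact mul_le_mul_of_nonneg_left hup (by positivity)
          _ = ((n+1:ℕ):ℝ) * (D₂ * ((n+1:ℕ):ℝ)^(r-1)) * (y^(n+1) * e) := by ring
          _ = D₂ * ((n:ℝ)+1)^r * (y^(n+1) * e) := by rw [h2]
      have hye : y^(n+1) * e = Real.exp (-(((n+1:ℕ):ℝ) * (σ n - Real.log y))) := by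
        rw [he_def, ypow_mul_exp hy0 (n+1) (σ n)]
      have hyeb : y^(n+1) * e ≤ 1/G := by
        rw [hye]
        refine le_trans ?_ hexpnδ
        apply Real.exp_le_exp.2
        have h9 : (n:ℝ)*δ ≤ ((n+1:ℕ):ℝ)*(σ n - Real.log y) := by
          rw [hδ_def]
          push_cast
          have h10 : (0:ℝ) < σ n - Real.log y := hδ_def ▸ hδpos
          exact mul_le_mul_of_nonneg_right (by linarith) h10.le
        linarith
      have hpr : (0:ℝ) < ((n:ℝ)+1)^r := Real.rpow_pos_of_pos hn1r r
      have hXb : ((n+1:ℕ):ℝ) * (a (n+1)) * e ≤ D₂ * ((n:ℝ)+1)^r / G := by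
        calc ((n+1:ℕ):ℝ) * (a (n+1)) * e ≤ D₂ * ((n:ℝ)+1)^r * (y^(n+1) * e) := hX
          _ ≤ D₂ * ((n:ℝ)+1)^r * (1/G) := by
              have h0 : (0:ℝ) ≤ D₂ * ((n:ℝ)+1)^r := by positivity
              exact mul_le_mul_of_nonneg_left hyeb h0
          _ = D₂ * ((n:ℝ)+1)^r / G := by ring
      have hfrac : D₂ * ((n:ℝ)+1)^r / G = D₂ / (4*(D₂+1)) := by
        rw [hG_def, show (4*(D₂+1)*((n:ℝ)+1)^r) = ((n:ℝ)+1)^r * (4*(D₂+1)) by ring,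
          ← div_div, mul_div_cancel_right₀ D₂ (ne_of_gt hpr)]
      have h34 : (3:ℝ)/4 ≤ 1 - e := by linarith
      have hnum : (0:ℝ) ≤ D₂ / (4*(D₂+1)) := by positivity
      have hEb : E ≤ (D₂ / (4*(D₂+1))) / (3/4) := by
        rw [hE_def]
        exact div_le_div₀ hnum (hfrac ▸ hXb) (by norm_num) h34
      have hlast : (D₂ / (4*(D₂+1))) / (3/4) < 1 := by
        rw [div_lt_one (by norm_num)]
        rw [div_lt_iff₀ (by positivity)]
        linarith
      linarith
    · rw [hE_def]
      apply div_nonneg _ (by linarith)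
      exact mul_nonneg (mul_nonneg (by positivity) (by positivity)) he_pos.le
  have hMlt : Mfun a (n+1) (σ n) < ((n:ℝ)+1) := by
    rw [hMsplit, hMn]
    linarith [hE_lt_one.1]
  have hMeq : Mfun a (n+1) (σ (n+1)) = ((n:ℝ)+1) := by
    rw [hMn1]; push_cast; ring
  have hσlt : σ (n+1) < σ n := by
    rcases lt_trichotomy (σ (n+1)) (σ n) with h|h|h
    · exact h
    · exfalso; rw [← h] at hMlt; rw [hMeq] at hMlt; exact lt_irrefl _ hMlt
    · exfalso
      have := Mfun_anti a ha (n+1) (by omega) hσn h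
      rw [hMeq] at this
      linarith
  refine ⟨hσlt, by linarith, B2_mono a n hσn1 hσlt.le, fun l _ => rho_mono a l n hσn1 hσlt.le⟩
end

section
/- Assume condition (exp). Then there exist a constant C > 0 and N such that 0 ≤ σ_n − σ_{n+1} ≤ C δ_n^{r+2} for all n ≥ N. -/
open Finset Filter

lemma one_sub_exp_pos {x : ℝ} (hx : 0 < x) : 0 < 1 - Real.exp (-x) := by
  have : Real.exp (-x) < 1 := Real.exp_lt_one_iff.mpr (by linarith)
  linarith

lemma inv_one_sub_exp_le {x : ℝ} (hx : 0 < x) :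
    (1 - Real.exp (-x))⁻¹ ≤ 1 + 1/x := by
  have h1 : x + 1 ≤ Real.exp x := by linarith [Real.add_one_le_exp x]
  have hex : (0:ℝ) < Real.exp x := Real.exp_pos x
  have h2 : Real.exp (-x) ≤ (x+1)⁻¹ := by
    rw [Real.exp_neg]
    exact inv_anti₀ (by linarith) h1
  have h3 : x/(x+1) ≤ 1 - Real.exp (-x) := by
    have he : 1 - (x+1)⁻¹ = x/(x+1) := by field_simp; ring
    linarith [he ▸ sub_le_sub_left h2 1]
  have h4 : (0:ℝ) < x/(x+1) := by positivity
  calc (1 - Real.exp (-x))⁻¹ ≤ (x/(x+1))⁻¹ := by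
        apply inv_anti₀ h4 h3
    _ = 1 + 1/x := by rw [inv_div]; field_simp

lemma rpow_le_exp_aux {x s : ℝ} (hx : 0 < x) (hs : 0 < s) :
    x ^ s ≤ s ^ s * Real.exp (x - s) := by
  have h1 : Real.log (x / s) ≤ x / s - 1 := Real.log_le_sub_one_of_pos (by positivity)
  have h2 : Real.log x - Real.log s ≤ x / s - 1 := by
    rwa [Real.log_div hx.ne' hs.ne'] at h1
  have h3 : s * Real.log x ≤ s * Real.log s + (x - s) := by
    have h := mul_le_mul_of_nonneg_left h2 hs.le
    have hxs : s * (x / s) = x := by field_simp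
    nlinarith
  calc x ^ s = Real.exp (Real.log x * s) := Real.rpow_def_of_pos hx s
    _ ≤ Real.exp (Real.log s * s + (x - s)) := by
        apply Real.exp_le_exp.mpr; nlinarith
    _ = s ^ s * Real.exp (x - s) := by
        rw [Real.exp_add, Real.rpow_def_of_pos hs]

lemma sum_exp_le {c : ℝ} (hc : 0 < c) (n : ℕ) :
    ∑ j ∈ Icc 1 n, Real.exp (-((j:ℝ)*c)) ≤ 1 + 1/c := by
  set t := Real.exp (-c) with ht
  have ht0 : 0 < t := Real.exp_pos _
  have ht1 : t < 1 := Real.exp_lt_one_iff.mpr (by linarith)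
  have hterm : ∀ j : ℕ, Real.exp (-((j:ℝ)*c)) = t^j := by
    intro j
    rw [ht, ← Real.exp_nat_mul]
    ring_nf
  calc ∑ j ∈ Icc 1 n, Real.exp (-((j:ℝ)*c))
      = ∑ j ∈ Icc 1 n, t^j := by simp [hterm]
    _ ≤ ∑ j ∈ range (n+1), t^j := by
        apply sum_le_sum_of_subset_of_nonneg
        · intro j hj; simp at hj ⊢; omega
        · intro j _ _; positivity
    _ = (t^(n+1) - 1)/(t - 1) := geom_sum_eq ht1.ne _
    _ ≤ (1 - t)⁻¹ := by
        rw [div_le_iff_of_neg (by linarith)]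
        have h1 : (0:ℝ) < 1 - t := by linarith
        have h2 : 0 < t^(n+1) := by positivity
        have h3 : t^(n+1) < 1 := pow_lt_one₀ ht0.le ht1 (by omega)
        have he : (1 - t)⁻¹ * (t - 1) = -1 := by
          field_simp; ring
        rw [he]; linarith
    _ ≤ 1 + 1/c := inv_one_sub_exp_le hc

lemma sum_rpow_exp_le {s δ : ℝ} (hs : 0 < s) (hδ : 0 < δ) (n : ℕ) :
    ∑ j ∈ Icc 1 n, (j:ℝ)^s * Real.exp (-((j:ℝ)*δ)) ≤
      (2*s/δ)^s * Real.exp (-s) * (1 + 2/δ) := by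
  have key : ∀ j ∈ Icc 1 n, (j:ℝ)^s * Real.exp (-((j:ℝ)*δ)) ≤
      (2*s/δ)^s * Real.exp (-s) * Real.exp (-((j:ℝ)*(δ/2))) := by
    intro j hj
    simp only [mem_Icc] at hj
    have hj1 : (1:ℝ) ≤ (j:ℝ) := by exact_mod_cast hj.1
    have hjpos : (0:ℝ) < j := by linarith
    have hx : (0:ℝ) < (j:ℝ)*δ/2 := by positivity
    have h1 : ((j:ℝ)*δ/2) ^ s ≤ s ^ s * Real.exp ((j:ℝ)*δ/2 - s) := rpow_le_exp_aux hx hs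
    have h2 : (j:ℝ)^s = ((j:ℝ)*δ/2)^s * (2/δ)^s := by
      rw [← Real.mul_rpow (by positivity) (by positivity)]
      congr 1
      field_simp
    rw [h2]
    have h3 : ((j:ℝ)*δ/2)^s * (2/δ)^s ≤ s ^ s * Real.exp ((j:ℝ)*δ/2 - s) * (2/δ)^s :=
      mul_le_mul_of_nonneg_right h1 (by positivity)
    calc ((j:ℝ)*δ/2)^s * (2/δ)^s * Real.exp (-((j:ℝ)*δ))
        ≤ s ^ s * Real.exp ((j:ℝ)*δ/2 - s) * (2/δ)^s * Real.exp (-((j:ℝ)*δ)) := by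
          apply mul_le_mul_of_nonneg_right h3 (by positivity)
      _ = (2*s/δ)^s * Real.exp (-s) * Real.exp (-((j:ℝ)*(δ/2))) := by
          rw [Real.exp_sub]
          have hss : (2*s/δ)^s = s^s * (2/δ)^s := by
            rw [← Real.mul_rpow hs.le (by positivity)]
            congr 1; ring
          have h4 : Real.exp ((j:ℝ) * δ / 2) / Real.exp s * Real.exp (-((j:ℝ) * δ)) =
              Real.exp (-s) * Real.exp (-((j:ℝ) * (δ/2))) := by
            rw [← Real.exp_sub, ← Real.exp_add, ← Real.exp_add]
            congr 1; ring
          rw [hss]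
          linear_combination (s^s * (2/δ)^s) * h4
    done
  calc ∑ j ∈ Icc 1 n, (j:ℝ)^s * Real.exp (-((j:ℝ)*δ))
      ≤ ∑ j ∈ Icc 1 n, (2*s/δ)^s * Real.exp (-s) * Real.exp (-((j:ℝ)*(δ/2))) :=
        sum_le_sum key
    _ = (2*s/δ)^s * Real.exp (-s) * ∑ j ∈ Icc 1 n, Real.exp (-((j:ℝ)*(δ/2))) := by
        rw [mul_sum]
    _ ≤ (2*s/δ)^s * Real.exp (-s) * (1 + 2/δ) := by
        apply mul_le_mul_of_nonneg_left _ (by positivity)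
        have := sum_exp_le (c := δ/2) (by positivity) n
        calc ∑ j ∈ Icc 1 n, Real.exp (-((j:ℝ)*(δ/2))) ≤ 1 + 1/(δ/2) := this
          _ = 1 + 2/δ := by rw [one_div_div]

-- generic: sum over Icc 1 n of nonneg terms bounded below via block Icc m (2m)
lemma sum_block_ge {f : ℕ → ℝ} {n m : ℕ} (hm : 1 ≤ m) (h2m : 2*m ≤ n)
    (hnonneg : ∀ j ∈ Icc 1 n, 0 ≤ f j) {c : ℝ}
    (hc : ∀ j ∈ Icc m (2*m), c ≤ f j) :
    ((m:ℝ)+1) * c ≤ ∑ j ∈ Icc 1 n, f j := by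
  have hsub : Icc m (2*m) ⊆ Icc 1 n := by
    intro j hj; simp only [mem_Icc] at hj ⊢; omega
  have h1 : ∑ j ∈ Icc m (2*m), f j ≤ ∑ j ∈ Icc 1 n, f j :=
    sum_le_sum_of_subset_of_nonneg hsub (fun j hj _ => hnonneg j hj)
  have h2 : ((m:ℝ)+1) * c = ∑ _j ∈ Icc m (2*m), c := by
    rw [sum_const, Nat.card_Icc]
    have : 2*m + 1 - m = m + 1 := by omega
    rw [this]; push_cast; ring
  rw [h2]
  exact le_trans (sum_le_sum hc) h1

lemma sum_rpow_exp_ge_mid {s δ : ℝ} {n : ℕ} (hs : 0 < s) (hδ : 0 < δ) (hδ1 : δ ≤ 1)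
    (h4 : 4 ≤ (n:ℝ) * δ) :
    Real.exp (-4) * δ^(-(s+1)) ≤ ∑ j ∈ Icc 1 n, (j:ℝ)^s * Real.exp (-((j:ℝ)*δ)) := by
  set m := ⌈1/δ⌉₊ with hm
  have hδinv1 : (1:ℝ) ≤ 1/δ := by rw [le_div_iff₀ hδ]; linarith
  have hm1 : 1 ≤ m := by
    rw [hm, Nat.one_le_ceil_iff]; linarith
  have hmge : 1/δ ≤ (m:ℝ) := Nat.le_ceil _
  have hmle : (m:ℝ) ≤ 1/δ + 1 := (Nat.ceil_lt_add_one (by positivity)).le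
  have h2m : 2*m ≤ n := by
    have h1 : ((2*m : ℕ):ℝ) ≤ 4/δ := by
      push_cast
      have : 1/δ + 1 ≤ 2/δ := by
        rw [div_add' _ _ _ hδ.ne', div_le_div_iff₀ hδ hδ]; nlinarith
      have h22 : 2*(2/δ) = 4/δ := by ring
      nlinarith
    have h2 : (4:ℝ)/δ ≤ (n:ℝ) := by rw [div_le_iff₀ hδ]; linarith
    exact_mod_cast le_trans h1 h2
  have hnonneg : ∀ j ∈ Icc 1 n, (0:ℝ) ≤ (j:ℝ)^s * Real.exp (-((j:ℝ)*δ)) := by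
    intro j _; positivity
  have hc : ∀ j ∈ Icc m (2*m), (1/δ)^s * Real.exp (-4) ≤ (j:ℝ)^s * Real.exp (-((j:ℝ)*δ)) := by
    intro j hj
    simp only [mem_Icc] at hj
    have hjm : (m:ℝ) ≤ (j:ℝ) := by exact_mod_cast hj.1
    have hj2m : (j:ℝ) ≤ 2*m := by exact_mod_cast hj.2
    have h1 : (1/δ)^s ≤ (j:ℝ)^s :=
      Real.rpow_le_rpow (by positivity) (le_trans hmge hjm) hs.le
    have h2 : Real.exp (-4) ≤ Real.exp (-((j:ℝ)*δ)) := by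
      apply Real.exp_le_exp.mpr
      have : (j:ℝ)*δ ≤ 2*(1/δ+1)*δ := by nlinarith
      have h3 : 2*(1/δ+1)*δ = 2 + 2*δ := by field_simp
      nlinarith
    exact mul_le_mul h1 h2 (Real.exp_pos _).le (by positivity)
  have hblock := sum_block_ge hm1 h2m hnonneg hc
  refine le_trans ?_ hblock
  have hrw : δ^(-(s+1)) = (1/δ)^s * (1/δ) := by
    rw [Real.rpow_neg hδ.le, Real.rpow_add hδ, Real.rpow_one, one_div,
      Real.inv_rpow hδ.le, mul_inv]
  rw [hrw]
  have : 1/δ ≤ (m:ℝ)+1 := by linarith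
  have hp : (0:ℝ) ≤ (1/δ)^s := by positivity
  nlinarith [Real.exp_pos (-4:ℝ), mul_le_mul_of_nonneg_left this (mul_nonneg hp (Real.exp_pos (-4:ℝ)).le)]

lemma sum_rpow_exp_ge_full {s δ : ℝ} {n : ℕ} (hs : 0 < s) (hδ : 0 ≤ δ) (hn : 8 ≤ n) :
    ((n:ℝ)/8)^(s+1) * Real.exp (-((n:ℝ)/2 * δ)) ≤
      ∑ j ∈ Icc 1 n, (j:ℝ)^s * Real.exp (-((j:ℝ)*δ)) := by
  set m := n/4 with hm
  have hm1 : 1 ≤ m := by omega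
  have h2m : 2*m ≤ n := by omega
  have hmn8 : (n:ℝ)/8 ≤ (m:ℝ) := by
    have : n ≤ 8*m := by omega
    have : (n:ℝ) ≤ 8*(m:ℝ) := by exact_mod_cast this
    linarith
  have h2mn2 : 2*(m:ℝ) ≤ (n:ℝ)/2 := by
    have : 4*m ≤ n := by omega
    have : 4*(m:ℝ) ≤ (n:ℝ) := by exact_mod_cast this
    linarith
  have hn8pos : (0:ℝ) < (n:ℝ)/8 := by
    have : (0:ℝ) < (n:ℝ) := by exact_mod_cast Nat.pos_of_ne_zero (by omega)
    positivity
  have hnonneg : ∀ j ∈ Icc 1 n, (0:ℝ) ≤ (j:ℝ)^s * Real.exp (-((j:ℝ)*δ)) := by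
    intro j _; positivity
  have hc : ∀ j ∈ Icc m (2*m),
      ((n:ℝ)/8)^s * Real.exp (-((n:ℝ)/2 * δ)) ≤ (j:ℝ)^s * Real.exp (-((j:ℝ)*δ)) := by
    intro j hj
    simp only [mem_Icc] at hj
    have hjm : (m:ℝ) ≤ (j:ℝ) := by exact_mod_cast hj.1
    have hj2m : (j:ℝ) ≤ 2*(m:ℝ) := by exact_mod_cast hj.2
    have h1 : ((n:ℝ)/8)^s ≤ (j:ℝ)^s :=
      Real.rpow_le_rpow hn8pos.le (by linarith) hs.le
    have h2 : Real.exp (-((n:ℝ)/2 * δ)) ≤ Real.exp (-((j:ℝ)*δ)) := by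
      apply Real.exp_le_exp.mpr
      have : (j:ℝ)*δ ≤ ((n:ℝ)/2)*δ := by nlinarith
      linarith
    exact mul_le_mul h1 h2 (Real.exp_pos _).le (by positivity)
  have hblock := sum_block_ge hm1 h2m hnonneg hc
  refine le_trans ?_ hblock
  have hrw : ((n:ℝ)/8)^(s+1) = ((n:ℝ)/8)^s * ((n:ℝ)/8) := by
    rw [Real.rpow_add hn8pos, Real.rpow_one]
  rw [hrw]
  have hmm : (n:ℝ)/8 ≤ (m:ℝ)+1 := by linarith
  have hp : (0:ℝ) ≤ ((n:ℝ)/8)^s * Real.exp (-((n:ℝ)/2 * δ)) := by positivity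
  nlinarith [mul_le_mul_of_nonneg_left hmm hp]

lemma y_exp_eq {y : ℝ} (hy : 0 < y) (j : ℕ) (σ : ℝ) :
    y^j * Real.exp (-((j:ℝ)*σ)) = Real.exp (-((j:ℝ)*(σ - Real.log y))) := by
  have h : y^j = Real.exp ((j:ℝ) * Real.log y) := by
    rw [Real.exp_nat_mul, Real.exp_log hy]
  rw [h, ← Real.exp_add]
  congr 1; ring

section terms
variable {a : ℕ → ℕ} {r y D₁ D₂ : ℝ}

lemma term_lb (hr : 0 < r) (hy : 0 < y) {j : ℕ} (hj : 1 ≤ j) {σ : ℝ} (hσ : 0 < σ)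
    (hlb : D₁ * (j:ℝ)^(r-1) * y^j ≤ (a j : ℝ)) :
    D₁ * (j:ℝ)^r * Real.exp (-((j:ℝ)*(σ - Real.log y))) ≤
      (j:ℝ) * (a j) * Real.exp (-((j:ℝ)*σ)) / (1 - Real.exp (-((j:ℝ)*σ))) := by
  have hjpos : (0:ℝ) < (j:ℝ) := by exact_mod_cast hj
  have hx : (0:ℝ) < (j:ℝ)*σ := by positivity
  have hd : 0 < 1 - Real.exp (-((j:ℝ)*σ)) := one_sub_exp_pos hx
  have hd1 : 1 - Real.exp (-((j:ℝ)*σ)) ≤ 1 := by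
    have := Real.exp_pos (-((j:ℝ)*σ)); linarith
  have hnum : D₁ * (j:ℝ)^r * Real.exp (-((j:ℝ)*(σ - Real.log y))) ≤
      (j:ℝ) * (a j) * Real.exp (-((j:ℝ)*σ)) := by
    rw [← y_exp_eq hy]
    have hr' : (j:ℝ)^r = (j:ℝ) * (j:ℝ)^(r-1) := by
      rw [← Real.rpow_one_add' hjpos.le (by intro h; exact hr.ne' (by linarith))]
      · congr 1; ring
    calc D₁ * (j:ℝ)^r * (y^j * Real.exp (-((j:ℝ)*σ)))
        = (j:ℝ) * (D₁ * (j:ℝ)^(r-1) * y^j) * Real.exp (-((j:ℝ)*σ)) := by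
          rw [hr']; ring
      _ ≤ (j:ℝ) * (a j) * Real.exp (-((j:ℝ)*σ)) := by
          apply mul_le_mul_of_nonneg_right _ (Real.exp_pos _).le
          exact mul_le_mul_of_nonneg_left hlb hjpos.le
  have hnn : (0:ℝ) ≤ (j:ℝ) * (a j) * Real.exp (-((j:ℝ)*σ)) := by positivity
  calc D₁ * (j:ℝ)^r * Real.exp (-((j:ℝ)*(σ - Real.log y)))
      ≤ (j:ℝ) * (a j) * Real.exp (-((j:ℝ)*σ)) := hnum
    _ ≤ (j:ℝ) * (a j) * Real.exp (-((j:ℝ)*σ)) / (1 - Real.exp (-((j:ℝ)*σ))) := by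
        rw [le_div_iff₀ hd]; nlinarith

lemma term_ub (hr : 0 < r) (hy : 1 ≤ y) {j : ℕ} (hj : 1 ≤ j) {σ : ℝ} (hσ : 0 < σ)
    (hδ : 0 < σ - Real.log y)
    (hub : (a j : ℝ) ≤ D₂ * (j:ℝ)^(r-1) * y^j) :
    (j:ℝ) * (a j) * Real.exp (-((j:ℝ)*σ)) / (1 - Real.exp (-((j:ℝ)*σ))) ≤
      D₂ * (j:ℝ)^r * Real.exp (-((j:ℝ)*(σ - Real.log y))) * (1 + 1/((j:ℝ)*(σ - Real.log y))) := by
  have hy0 : (0:ℝ) < y := lt_of_lt_of_le one_pos hy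
  have hjpos : (0:ℝ) < (j:ℝ) := by exact_mod_cast hj
  have hx : (0:ℝ) < (j:ℝ)*σ := by positivity
  have hd : 0 < 1 - Real.exp (-((j:ℝ)*σ)) := one_sub_exp_pos hx
  have hδσ : σ - Real.log y ≤ σ := by
    have := Real.log_nonneg hy; linarith
  have hnum : (j:ℝ) * (a j) * Real.exp (-((j:ℝ)*σ)) ≤
      D₂ * (j:ℝ)^r * Real.exp (-((j:ℝ)*(σ - Real.log y))) := by
    rw [← y_exp_eq hy0]
    have hr' : (j:ℝ)^r = (j:ℝ) * (j:ℝ)^(r-1) := by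
      rw [← Real.rpow_one_add' hjpos.le (by intro h; exact hr.ne' (by linarith))]
      · congr 1; ring
    calc (j:ℝ) * (a j) * Real.exp (-((j:ℝ)*σ))
        ≤ (j:ℝ) * (D₂ * (j:ℝ)^(r-1) * y^j) * Real.exp (-((j:ℝ)*σ)) := by
          apply mul_le_mul_of_nonneg_right _ (Real.exp_pos _).le
          exact mul_le_mul_of_nonneg_left hub hjpos.le
      _ = D₂ * (j:ℝ)^r * (y^j * Real.exp (-((j:ℝ)*σ))) := by rw [hr']; ring
  have hinv : (1 - Real.exp (-((j:ℝ)*σ)))⁻¹ ≤ 1 + 1/((j:ℝ)*(σ - Real.log y)) := by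
    calc (1 - Real.exp (-((j:ℝ)*σ)))⁻¹ ≤ 1 + 1/((j:ℝ)*σ) := inv_one_sub_exp_le hx
      _ ≤ 1 + 1/((j:ℝ)*(σ - Real.log y)) := by
          have h1 : (0:ℝ) < (j:ℝ)*(σ - Real.log y) := by positivity
          have h2 : (j:ℝ)*(σ - Real.log y) ≤ (j:ℝ)*σ := by nlinarith
          have := one_div_le_one_div_of_le h1 h2
          linarith
  have hnn : (0:ℝ) ≤ (j:ℝ) * (a j) * Real.exp (-((j:ℝ)*σ)) := by positivity
  calc (j:ℝ) * (a j) * Real.exp (-((j:ℝ)*σ)) / (1 - Real.exp (-((j:ℝ)*σ)))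
      = (j:ℝ) * (a j) * Real.exp (-((j:ℝ)*σ)) * (1 - Real.exp (-((j:ℝ)*σ)))⁻¹ := by
        rw [div_eq_mul_inv]
    _ ≤ (j:ℝ) * (a j) * Real.exp (-((j:ℝ)*σ)) * (1 + 1/((j:ℝ)*(σ - Real.log y))) := by
        apply mul_le_mul_of_nonneg_left hinv hnn
    _ ≤ D₂ * (j:ℝ)^r * Real.exp (-((j:ℝ)*(σ - Real.log y))) * (1 + 1/((j:ℝ)*(σ - Real.log y))) := by
        apply mul_le_mul_of_nonneg_right hnum
        have h1 : (0:ℝ) < (j:ℝ)*(σ - Real.log y) := by positivity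
        positivity

end terms

lemma term_form {c x : ℝ} (hx : 0 < x) :
    c * Real.exp (-x) / (1 - Real.exp (-x)) = c / (Real.exp x - 1) := by
  have h1 : Real.exp x ≠ 0 := (Real.exp_pos x).ne'
  have h2 : (1 - Real.exp (-x)) ≠ 0 := (one_sub_exp_pos hx).ne'
  have h3 : Real.exp x - 1 ≠ 0 := by
    have : 1 < Real.exp x := Real.one_lt_exp_iff.mpr hx
    linarith
  rw [Real.exp_neg]
  field_simp

/-- key quantitative monotonicity, per term -/
lemma term_key {c : ℝ} (hc : 0 ≤ c) {j : ℕ} (hj : 1 ≤ j) {σ' σ : ℝ}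
    (h0 : 0 < σ') (hle : σ' ≤ σ) :
    (σ - σ') * ((j:ℝ) * c * Real.exp (-((j:ℝ)*σ))) ≤
      c * Real.exp (-((j:ℝ)*σ')) / (1 - Real.exp (-((j:ℝ)*σ'))) -
      c * Real.exp (-((j:ℝ)*σ)) / (1 - Real.exp (-((j:ℝ)*σ))) := by
  have hjpos : (0:ℝ) < (j:ℝ) := by exact_mod_cast hj
  have hx' : (0:ℝ) < (j:ℝ)*σ' := by positivity
  have hσ0 : 0 < σ := lt_of_lt_of_le h0 hle
  have hx : (0:ℝ) < (j:ℝ)*σ := by positivity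
  rw [term_form hx', term_form hx]
  set A := Real.exp ((j:ℝ)*σ') with hA
  set B := Real.exp ((j:ℝ)*σ) with hB
  have hA1 : 1 < A := Real.one_lt_exp_iff.mpr hx'
  have hB1 : 1 < B := Real.one_lt_exp_iff.mpr hx
  have hAB : A ≤ B := Real.exp_le_exp.mpr (by nlinarith)
  have hBA : A * ((j:ℝ)*(σ - σ')) ≤ B - A := by
    have h1 : B = A * Real.exp ((j:ℝ)*(σ - σ')) := by
      rw [hA, hB, ← Real.exp_add]; congr 1; ring
    have h2 : (j:ℝ)*(σ - σ') + 1 ≤ Real.exp ((j:ℝ)*(σ - σ')) := by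
      linarith [Real.add_one_le_exp ((j:ℝ)*(σ - σ'))]
    nlinarith [Real.exp_pos ((j:ℝ)*(σ-σ'))]
  have hA0 : A - 1 ≠ 0 := by linarith
  have hB0 : B - 1 ≠ 0 := by linarith
  have hdiff : c/(A-1) - c/(B-1) = c * (B - A) / ((A-1)*(B-1)) := by
    field_simp
    ring
  rw [hdiff]
  have hD : (0:ℝ) < (A-1)*(B-1) := by nlinarith
  have hBpos : (0:ℝ) < B := by linarith
  have step1 : c * (A * ((j:ℝ)*(σ - σ'))) / ((A-1)*(B-1)) ≤ c * (B - A) / ((A-1)*(B-1)) := by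
    gcongr
  have hfr : 1/B ≤ A/((A-1)*(B-1)) := by
    rw [div_le_div_iff₀ hBpos hD]
    nlinarith
  have hcf : (0:ℝ) ≤ c*(j:ℝ)*(σ-σ') := by
    have : (0:ℝ) ≤ σ - σ' := by linarith
    positivity
  calc (σ - σ') * ((j:ℝ) * c * Real.exp (-((j:ℝ)*σ)))
      = (c*(j:ℝ)*(σ-σ')) * (1/B) := by
        rw [Real.exp_neg, ← hB]; ring
    _ ≤ (c*(j:ℝ)*(σ-σ')) * (A/((A-1)*(B-1))) := mul_le_mul_of_nonneg_left hfr hcf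
    _ = c * (A * ((j:ℝ)*(σ - σ'))) / ((A-1)*(B-1)) := by ring
    _ ≤ c * (B - A) / ((A-1)*(B-1)) := step1

section agg
variable {a : ℕ → ℕ} {r y D₁ D₂ : ℝ}

lemma Mfun_lb (hr : 0 < r) (hy : 0 < y)
    (hlb : ∀ j : ℕ, 1 ≤ j → D₁ * (j:ℝ)^(r-1) * y^j ≤ (a j : ℝ))
    (n : ℕ) {σ : ℝ} (hσ : 0 < σ) :
    D₁ * ∑ j ∈ Icc 1 n, (j:ℝ)^r * Real.exp (-((j:ℝ)*(σ - Real.log y))) ≤ Mfun a n σ := by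
  rw [Mfun, mul_sum]
  apply sum_le_sum
  intro j hj
  simp only [mem_Icc] at hj
  have := term_lb hr hy hj.1 hσ (hlb j hj.1)
  calc D₁ * ((j:ℝ)^r * Real.exp (-((j:ℝ)*(σ - Real.log y))))
      = D₁ * (j:ℝ)^r * Real.exp (-((j:ℝ)*(σ - Real.log y))) := by ring
    _ ≤ _ := this

lemma Mfun_ub (hr : 0 < r) (hy : 1 ≤ y)
    (hub : ∀ j : ℕ, 1 ≤ j → (a j : ℝ) ≤ D₂ * (j:ℝ)^(r-1) * y^j)
    (hD₂ : 0 ≤ D₂)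
    (n : ℕ) {σ : ℝ} (hσ : 0 < σ) (hδ : 0 < σ - Real.log y) :
    Mfun a n σ ≤ D₂ * (1 + 1/(σ - Real.log y)) *
      ∑ j ∈ Icc 1 n, (j:ℝ)^r * Real.exp (-((j:ℝ)*(σ - Real.log y))) := by
  rw [Mfun, mul_sum]
  apply sum_le_sum
  intro j hj
  simp only [mem_Icc] at hj
  have hjpos : (0:ℝ) < (j:ℝ) := by exact_mod_cast hj.1
  have hj1 : (1:ℝ) ≤ (j:ℝ) := by exact_mod_cast hj.1
  have h1 := term_ub hr hy hj.1 hσ hδ (hub j hj.1)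
  have h2 : 1 + 1/((j:ℝ)*(σ - Real.log y)) ≤ 1 + 1/(σ - Real.log y) := by
    have h3 : σ - Real.log y ≤ (j:ℝ)*(σ - Real.log y) := by nlinarith
    have := one_div_le_one_div_of_le hδ h3
    linarith
  calc (j:ℝ) * (a j) * Real.exp (-((j:ℝ)*σ)) / (1 - Real.exp (-((j:ℝ)*σ)))
      ≤ D₂ * (j:ℝ)^r * Real.exp (-((j:ℝ)*(σ - Real.log y))) * (1 + 1/((j:ℝ)*(σ - Real.log y))) := h1
    _ ≤ D₂ * (j:ℝ)^r * Real.exp (-((j:ℝ)*(σ - Real.log y))) * (1 + 1/(σ - Real.log y)) := by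
        apply mul_le_mul_of_nonneg_left h2
        positivity
    _ = D₂ * (1 + 1/(σ - Real.log y)) * ((j:ℝ)^r * Real.exp (-((j:ℝ)*(σ - Real.log y)))) := by ring

lemma Mfun_sq_lb (hr : 0 < r) (hy : 0 < y)
    (hlb : ∀ j : ℕ, 1 ≤ j → D₁ * (j:ℝ)^(r-1) * y^j ≤ (a j : ℝ))
    (n : ℕ) (σ : ℝ) :
    D₁ * ∑ j ∈ Icc 1 n, (j:ℝ)^(r+1) * Real.exp (-((j:ℝ)*(σ - Real.log y))) ≤
      ∑ j ∈ Icc 1 n, (j:ℝ)^2 * (a j) * Real.exp (-((j:ℝ)*σ)) := by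
  rw [mul_sum]
  apply sum_le_sum
  intro j hj
  simp only [mem_Icc] at hj
  have hjpos : (0:ℝ) < (j:ℝ) := by exact_mod_cast hj.1
  have hsplit : (j:ℝ)^(r+1) = (j:ℝ)^(2:ℕ) * (j:ℝ)^(r-1) := by
    rw [← Real.rpow_natCast (j:ℝ) 2, ← Real.rpow_add hjpos]
    norm_num
    ring_nf
  rw [← y_exp_eq hy, hsplit]
  calc D₁ * ((j:ℝ)^(2:ℕ) * (j:ℝ)^(r-1) * (y^j * Real.exp (-((j:ℝ)*σ))))
      = (j:ℝ)^2 * (D₁ * (j:ℝ)^(r-1) * y^j) * Real.exp (-((j:ℝ)*σ)) := by ring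
    _ ≤ (j:ℝ)^2 * (a j) * Real.exp (-((j:ℝ)*σ)) := by
        apply mul_le_mul_of_nonneg_right _ (Real.exp_pos _).le
        apply mul_le_mul_of_nonneg_left (hlb j hj.1) (by positivity)

lemma Mfun_key_sum (a : ℕ → ℕ) (m : ℕ) {σ' σ : ℝ} (h0 : 0 < σ') (hle : σ' ≤ σ) :
    (σ - σ') * ∑ j ∈ Icc 1 m, (j:ℝ)^2 * (a j) * Real.exp (-((j:ℝ)*σ)) ≤
      Mfun a m σ' - Mfun a m σ := by
  rw [Mfun, Mfun, ← sum_sub_distrib, mul_sum]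
  apply sum_le_sum
  intro j hj
  simp only [mem_Icc] at hj
  have hc : (0:ℝ) ≤ (j:ℝ) * (a j) := by positivity
  have := term_key hc hj.1 h0 hle
  calc (σ - σ') * ((j:ℝ)^2 * (a j) * Real.exp (-((j:ℝ)*σ)))
      = (σ - σ') * ((j:ℝ) * ((j:ℝ) * (a j)) * Real.exp (-((j:ℝ)*σ))) := by ring
    _ ≤ (j:ℝ) * (a j) * Real.exp (-((j:ℝ)*σ')) / (1 - Real.exp (-((j:ℝ)*σ'))) -
        (j:ℝ) * (a j) * Real.exp (-((j:ℝ)*σ)) / (1 - Real.exp (-((j:ℝ)*σ))) := this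

end agg

set_option maxHeartbeats 2000000 in
/-- under condition (exp), there exist a constant `C > 0` and `N` such that
`0 ≤ σ_n - σ_{n+1} ≤ C δ_n^{r+2}` for all `n ≥ N`, where `δ_n = σ_n - log y`. -/
theorem sigma_difference_bound (a : ℕ → ℕ) (r y : ℝ) (hr : 0 < r) (hy : 1 ≤ y)
    (hexp : ExpansiveCond a r y)
    (σ : ℕ → ℝ) (hσ : ∀ n : ℕ, 1 ≤ n → 0 < σ n ∧ Mfun a n (σ n) = n) :
    ∃ C : ℝ, 0 < C ∧ ∃ N : ℕ, ∀ n ≥ N,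
      0 ≤ σ n - σ (n + 1) ∧
      σ n - σ (n + 1) ≤ C * (σ n - Real.log y) ^ (r + 2) := by
  obtain ⟨D₁, D₂, hD₁, hD₂, hD⟩ := hexp
  have hlb : ∀ j : ℕ, 1 ≤ j → D₁ * (j:ℝ)^(r-1) * y^j ≤ (a j : ℝ) := fun j hj => (hD j hj).1
  have hub : ∀ j : ℕ, 1 ≤ j → (a j : ℝ) ≤ D₂ * (j:ℝ)^(r-1) * y^j := fun j hj => (hD j hj).2
  have hy0 : (0:ℝ) < y := lt_of_lt_of_le one_pos hy
  have hlogy : 0 ≤ Real.log y := Real.log_nonneg hy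
  have h8pos : (0:ℝ) < (8:ℝ)^(r+1) := Real.rpow_pos_of_pos (by norm_num) _
  refine ⟨Real.exp 4 / D₁, by positivity, ?_⟩
  have htend : Tendsto (fun n : ℕ => ((n:ℝ))^r) atTop atTop :=
    (tendsto_rpow_atTop hr).comp tendsto_natCast_atTop_atTop
  have hev : ∀ᶠ n : ℕ in atTop, 8 ≤ n ∧ 6*D₂*(2*r)^r*Real.exp (-r) < (n:ℕ) ∧
      (8:ℝ)^(r+1)/D₁ < (n:ℝ)^r ∧ Real.exp 2 * 8^(r+1)/D₁ ≤ (n:ℝ)^r ∧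
      2^(r+1)*D₂*((8:ℝ)^(r+1))^2/(D₁^2) ≤ (n:ℝ)^r := by
    filter_upwards [eventually_ge_atTop 8,
      (tendsto_natCast_atTop_atTop (R := ℝ)).eventually_gt_atTop (6*D₂*(2*r)^r*Real.exp (-r)),
      htend.eventually_gt_atTop ((8:ℝ)^(r+1)/D₁),
      htend.eventually_ge_atTop (Real.exp 2 * 8^(r+1)/D₁),
      htend.eventually_ge_atTop (2^(r+1)*D₂*((8:ℝ)^(r+1))^2/(D₁^2))] with n h1 h2 h3 h4 h5
    exact ⟨h1, h2, h3, h4, h5⟩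
  obtain ⟨N, hN⟩ := eventually_atTop.mp hev
  refine ⟨N, fun n hn => ?_⟩
  obtain ⟨hc1, hc3, hc2, hc4, hc5⟩ := hN n hn
  have h1n : 1 ≤ n := by omega
  obtain ⟨hσpos, hMn⟩ := hσ n h1n
  obtain ⟨hσpos1, hMn1⟩ := hσ (n+1) (by omega)
  set δ := σ n - Real.log y with hδdef
  have hnR : (0:ℝ) < (n:ℝ) := by exact_mod_cast Nat.pos_of_ne_zero (by omega)
  have hnr_pos : (0:ℝ) < (n:ℝ)^r := Real.rpow_pos_of_pos hnR _
  have hn1R : (1:ℝ) ≤ (n:ℝ) := by exact_mod_cast h1n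
  have hsplit8 : ((n:ℝ)/8)^(r+1) = (n:ℝ)^r * (n:ℝ) / (8:ℝ)^(r+1) := by
    rw [Real.div_rpow hnR.le (by norm_num), Real.rpow_add_one hnR.ne' r]
  -- Step A : 0 < δ
  have hδpos : 0 < δ := by
    by_contra hcon
    push_neg at hcon
    have hlow := Mfun_lb hr hy0 hlb n hσpos
    have hmono : ∑ j ∈ Icc 1 n, (j:ℝ)^r * Real.exp (-((j:ℝ)*(0:ℝ))) ≤
        ∑ j ∈ Icc 1 n, (j:ℝ)^r * Real.exp (-((j:ℝ)*δ)) := by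
      apply sum_le_sum
      intro j hj
      simp only [mem_Icc] at hj
      have hjpos : (0:ℝ) ≤ (j:ℝ) := by positivity
      apply mul_le_mul_of_nonneg_left _ (by positivity)
      apply Real.exp_le_exp.mpr
      nlinarith
    have hfull := sum_rpow_exp_ge_full (s := r) (δ := (0:ℝ)) (n := n) hr le_rfl hc1
    have hD1n : (8:ℝ)^(r+1) < D₁ * (n:ℝ)^r := by
      rw [div_lt_iff₀ hD₁] at hc2; linarith [hc2]
    have hlow2 : D₁ * (((n:ℝ)/8)^(r+1) * Real.exp (-((n:ℝ)/2 * 0))) ≤ (n:ℝ) := by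
      calc D₁ * (((n:ℝ)/8)^(r+1) * Real.exp (-((n:ℝ)/2 * 0)))
          ≤ D₁ * ∑ j ∈ Icc 1 n, (j:ℝ)^r * Real.exp (-((j:ℝ)*(0:ℝ))) := by
            apply mul_le_mul_of_nonneg_left hfull hD₁.le
        _ ≤ D₁ * ∑ j ∈ Icc 1 n, (j:ℝ)^r * Real.exp (-((j:ℝ)*δ)) := by
            apply mul_le_mul_of_nonneg_left hmono hD₁.le
        _ ≤ Mfun a n (σ n) := hlow
        _ = (n:ℝ) := hMn
    simp only [mul_zero, neg_zero, Real.exp_zero, mul_one] at hlow2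
    rw [hsplit8, ← mul_div_assoc] at hlow2
    have h' := (div_le_iff₀ h8pos).mp hlow2
    nlinarith [mul_lt_mul_of_pos_right hD1n hnR]
  -- Step B : δ ≤ 1
  have hδ1 : δ ≤ 1 := by
    by_contra hcon
    push_neg at hcon
    have hδp : (0:ℝ) < δ := by linarith
    have hup := Mfun_ub hr hy hub hD₂.le n hσpos hδp
    have hsum := sum_rpow_exp_le hr hδp n
    have hb1 : 1 + 1/δ ≤ 2 := by
      have : 1/δ ≤ 1 := by rw [div_le_one hδp]; linarith
      linarith
    have hb2 : (2*r/δ)^r ≤ (2*r)^r := by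
      apply Real.rpow_le_rpow (by positivity) _ hr.le
      rw [div_le_iff₀ hδp]; nlinarith
    have hb3 : 1 + 2/δ ≤ 3 := by
      have : 2/δ ≤ 2 := by rw [div_le_iff₀ hδp]; nlinarith
      linarith
    have hsumpos : (0:ℝ) ≤ ∑ j ∈ Icc 1 n, (j:ℝ)^r * Real.exp (-((j:ℝ)*δ)) := by
      apply sum_nonneg; intro j _; positivity
    have hS : ∑ j ∈ Icc 1 n, (j:ℝ)^r * Real.exp (-((j:ℝ)*δ)) ≤ (2*r)^r * Real.exp (-r) * 3 := by
      calc ∑ j ∈ Icc 1 n, (j:ℝ)^r * Real.exp (-((j:ℝ)*δ))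
          ≤ (2*r/δ)^r * Real.exp (-r) * (1 + 2/δ) := hsum
        _ ≤ (2*r)^r * Real.exp (-r) * 3 := by
            apply mul_le_mul _ hb3 (by positivity) (by positivity)
            exact mul_le_mul_of_nonneg_right hb2 (Real.exp_pos _).le
    have hfin : (n:ℝ) ≤ 6*D₂*(2*r)^r*Real.exp (-r) := by
      calc (n:ℝ) = Mfun a n (σ n) := hMn.symm
        _ ≤ D₂ * (1 + 1/δ) * ∑ j ∈ Icc 1 n, (j:ℝ)^r * Real.exp (-((j:ℝ)*δ)) := hup
        _ ≤ (D₂ * 2) * ((2*r)^r * Real.exp (-r) * 3) := by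
            apply mul_le_mul _ hS hsumpos (by positivity)
            nlinarith
        _ = 6*D₂*(2*r)^r*Real.exp (-r) := by ring
    linarith
  -- Step C : lower bound on n*δ
  have hfull2 := sum_rpow_exp_ge_full (s := r) (δ := δ) (n := n) hr hδpos.le hc1
  have hQn : D₁ * (((n:ℝ)/8)^(r+1) * Real.exp (-((n:ℝ)/2 * δ))) ≤ (n:ℝ) := by
    calc D₁ * (((n:ℝ)/8)^(r+1) * Real.exp (-((n:ℝ)/2 * δ)))
        ≤ D₁ * ∑ j ∈ Icc 1 n, (j:ℝ)^r * Real.exp (-((j:ℝ)*δ)) :=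
          mul_le_mul_of_nonneg_left hfull2 hD₁.le
      _ ≤ Mfun a n (σ n) := Mfun_lb hr hy0 hlb n hσpos
      _ = (n:ℝ) := hMn
  set Q := D₁ * (n:ℝ)^r / (8:ℝ)^(r+1) with hQdef
  have hQpos : 0 < Q := by rw [hQdef]; positivity
  have hQle : Q ≤ Real.exp ((n:ℝ)/2 * δ) := by
    set t := Real.exp ((n:ℝ)/2 * δ) with ht
    have htpos : 0 < t := Real.exp_pos _
    rw [hsplit8, Real.exp_neg, ← ht] at hQn
    have h2 : Q * (n:ℝ) ≤ (n:ℝ) * t := by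
      have h3 := mul_le_mul_of_nonneg_right hQn htpos.le
      calc Q * (n:ℝ) = D₁ * ((n:ℝ)^r * (n:ℝ) / (8:ℝ)^(r+1) * (t⁻¹ * t)) := by
            rw [inv_mul_cancel₀ htpos.ne']; rw [hQdef]; ring
        _ = D₁ * ((n:ℝ)^r * (n:ℝ) / (8:ℝ)^(r+1) * t⁻¹) * t := by ring
        _ ≤ (n:ℝ) * t := h3
    nlinarith
  have hQ2 : Real.exp 2 ≤ Q := by
    rw [hQdef, le_div_iff₀ h8pos]
    have h4 := (div_le_iff₀ hD₁).mp hc4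
    nlinarith
  have hnδ4 : 4 ≤ (n:ℝ)*δ := by
    have h2t := Real.exp_le_exp.mp (le_trans hQ2 hQle)
    nlinarith [h2t]
  have hQsq : Q^2 ≤ Real.exp ((n:ℝ)*δ) := by
    have he : Real.exp ((n:ℝ)*δ) = Real.exp ((n:ℝ)/2*δ) * Real.exp ((n:ℝ)/2*δ) := by
      rw [← Real.exp_add]; congr 1; ring
    rw [he, sq]
    exact mul_le_mul hQle hQle hQpos.le (Real.exp_pos _).le
  -- Step D : last term at σ n is ≤ 1
  have hcastA : ((n+1:ℕ):ℝ) = (n:ℝ)+1 := by push_cast; ring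
  have hj1 : 1 ≤ n+1 := by omega
  have hMsplit : Mfun a (n+1) (σ n) = Mfun a n (σ n) +
      ((n+1:ℕ):ℝ) * (a (n+1)) * Real.exp (-(((n+1:ℕ):ℝ) * σ n)) /
        (1 - Real.exp (-(((n+1:ℕ):ℝ) * σ n))) := by
    rw [Mfun, Mfun, Finset.sum_Icc_succ_top hj1]
  have hA1δ : 1 ≤ ((n+1:ℕ):ℝ) * δ := by
    rw [hcastA]; nlinarith
  have hEub : ((n+1:ℕ):ℝ) * (a (n+1)) * Real.exp (-(((n+1:ℕ):ℝ) * σ n)) /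
      (1 - Real.exp (-(((n+1:ℕ):ℝ) * σ n))) ≤ 1 := by
    have h1 := term_ub (a := a) hr hy (j := n+1) hj1 hσpos hδpos (hub (n+1) hj1)
    have hfac : 1 + 1/(((n+1:ℕ):ℝ)*δ) ≤ 2 := by
      have h0 : (0:ℝ) < ((n+1:ℕ):ℝ)*δ := by linarith
      have : 1/(((n+1:ℕ):ℝ)*δ) ≤ 1 := by rw [div_le_one h0]; linarith
      linarith
    have hu : (0:ℝ) < (Q^2)⁻¹ := by positivity
    have hexpb : Real.exp (-(((n+1:ℕ):ℝ)*δ)) ≤ (Q^2)⁻¹ := by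
      rw [Real.exp_neg]
      apply inv_anti₀ (by positivity)
      calc Q^2 ≤ Real.exp ((n:ℝ)*δ) := hQsq
        _ ≤ Real.exp (((n+1:ℕ):ℝ)*δ) := by
            apply Real.exp_le_exp.mpr
            rw [hcastA]; nlinarith
    have hpow : ((n+1:ℕ):ℝ)^r ≤ 2^r * (n:ℝ)^r := by
      rw [hcastA, ← Real.mul_rpow (by norm_num) hnR.le]
      apply Real.rpow_le_rpow (by linarith) (by nlinarith) hr.le
    have hApos : (0:ℝ) ≤ ((n+1:ℕ):ℝ)^r := by positivity
    have hQ2ge : 2^(r+1)*D₂*(n:ℝ)^r ≤ Q^2 := by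
      have h5 := mul_le_mul_of_nonneg_right ((div_le_iff₀ (by positivity)).mp hc5) hnr_pos.le
      rw [hQdef, div_pow, mul_pow]
      rw [le_div_iff₀ (by positivity)]
      nlinarith [h5]
    calc ((n+1:ℕ):ℝ) * (a (n+1)) * Real.exp (-(((n+1:ℕ):ℝ) * σ n)) /
        (1 - Real.exp (-(((n+1:ℕ):ℝ) * σ n)))
        ≤ D₂ * ((n+1:ℕ):ℝ)^r * Real.exp (-(((n+1:ℕ):ℝ)*δ)) * (1 + 1/(((n+1:ℕ):ℝ)*δ)) := h1
      _ ≤ D₂ * ((n+1:ℕ):ℝ)^r * Real.exp (-(((n+1:ℕ):ℝ)*δ)) * 2 := by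
          apply mul_le_mul_of_nonneg_left hfac (by positivity)
      _ ≤ D₂ * ((n+1:ℕ):ℝ)^r * (Q^2)⁻¹ * 2 := by
          apply mul_le_mul_of_nonneg_right _ (by norm_num)
          exact mul_le_mul_of_nonneg_left hexpb (by positivity)
      _ ≤ D₂ * (2^r * (n:ℝ)^r) * (Q^2)⁻¹ * 2 := by
          apply mul_le_mul_of_nonneg_right _ (by norm_num)
          apply mul_le_mul_of_nonneg_right _ hu.le
          exact mul_le_mul_of_nonneg_left hpow hD₂.le
      _ = (2^(r+1)*D₂*(n:ℝ)^r) * (Q^2)⁻¹ := by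
          rw [Real.rpow_add_one (by norm_num : (2:ℝ) ≠ 0) r]; ring
      _ ≤ Q^2 * (Q^2)⁻¹ := mul_le_mul_of_nonneg_right hQ2ge hu.le
      _ = 1 := mul_inv_cancel₀ (by positivity)
  -- Step E : monotonicity
  have hmono2 : σ (n+1) ≤ σ n := by
    by_contra hcon
    push_neg at hcon
    have hkey := Mfun_key_sum a (n+1) (σ' := σ n) (σ := σ (n+1)) hσpos hcon.le
    have hSpos : 0 < ∑ j ∈ Icc 1 (n+1), (j:ℝ)^2 * (a j) * Real.exp (-((j:ℝ)*(σ (n+1)))) := by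
      apply sum_pos'
      · intro j _; positivity
      · refine ⟨1, by simp, ?_⟩
        have ha1 : (0:ℝ) < a 1 := by
          have := hlb 1 le_rfl
          have h1r : ((1:ℕ):ℝ)^(r-1) = 1 := by
            rw [Nat.cast_one, Real.one_rpow]
          rw [h1r] at this
          nlinarith [this]
        positivity
    have hdpos : 0 < Mfun a (n+1) (σ n) - Mfun a (n+1) (σ (n+1)) :=
      lt_of_lt_of_le (mul_pos (by linarith) hSpos) hkey
    rw [hMsplit, hMn1, hMn] at hdpos
    push_cast at hdpos
    have hEub' := hEub
    push_cast at hEub'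
    linarith
  refine ⟨by linarith, ?_⟩
  -- Step F : quantitative bound
  have hkey2 := Mfun_key_sum a n (σ' := σ (n+1)) (σ := σ n) hσpos1 hmono2
  have hsplit2 : Mfun a (n+1) (σ (n+1)) = Mfun a n (σ (n+1)) +
      ((n+1:ℕ):ℝ) * (a (n+1)) * Real.exp (-(((n+1:ℕ):ℝ) * σ (n+1))) /
        (1 - Real.exp (-(((n+1:ℕ):ℝ) * σ (n+1)))) := by
    rw [Mfun, Mfun, Finset.sum_Icc_succ_top hj1]
  have hE'nn : 0 ≤ ((n+1:ℕ):ℝ) * (a (n+1)) * Real.exp (-(((n+1:ℕ):ℝ) * σ (n+1))) /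
      (1 - Real.exp (-(((n+1:ℕ):ℝ) * σ (n+1)))) := by
    have hx : (0:ℝ) < ((n+1:ℕ):ℝ) * σ (n+1) := by
      rw [hcastA]; positivity
    have := one_sub_exp_pos hx
    positivity
  have hMle : Mfun a n (σ (n+1)) ≤ (n:ℝ)+1 := by
    have h6 : Mfun a n (σ (n+1)) +
        ((n+1:ℕ):ℝ) * (a (n+1)) * Real.exp (-(((n+1:ℕ):ℝ) * σ (n+1))) /
          (1 - Real.exp (-(((n+1:ℕ):ℝ) * σ (n+1)))) = (n:ℝ)+1 := by
      rw [← hsplit2, hMn1]; push_cast; ring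
    linarith [hE'nn]
  have hg1 : (σ n - σ (n+1)) * ∑ j ∈ Icc 1 n, (j:ℝ)^2 * (a j) * Real.exp (-((j:ℝ)*(σ n))) ≤ 1 := by
    have h7 := hkey2
    rw [hMn] at h7
    linarith
  have hSlb : D₁ * (Real.exp (-4) * δ^(-(r+2))) ≤
      ∑ j ∈ Icc 1 n, (j:ℝ)^2 * (a j) * Real.exp (-((j:ℝ)*(σ n))) := by
    have hmid := sum_rpow_exp_ge_mid (s := r+1) (n := n) (by linarith) hδpos hδ1 hnδ4
    have hsq := Mfun_sq_lb hr hy0 hlb n (σ n)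
    calc D₁ * (Real.exp (-4) * δ^(-(r+2)))
        = D₁ * (Real.exp (-4) * δ^(-(r+1+1))) := by rw [show (-(r+2):ℝ) = -(r+1+1) by ring]
      _ ≤ D₁ * ∑ j ∈ Icc 1 n, (j:ℝ)^(r+1) * Real.exp (-((j:ℝ)*δ)) :=
          mul_le_mul_of_nonneg_left hmid hD₁.le
      _ ≤ _ := hsq
  have hδr2 : 0 < δ^(r+2) := Real.rpow_pos_of_pos hδpos _
  have hXpos : 0 < D₁ * (Real.exp (-4) * δ^(-(r+2))) := by
    have := Real.rpow_pos_of_pos hδpos (-(r+2))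
    positivity
  have hg0 : (0:ℝ) ≤ σ n - σ (n+1) := by linarith
  have hg2 : (σ n - σ (n+1)) * (D₁ * (Real.exp (-4) * δ^(-(r+2)))) ≤ 1 :=
    le_trans (mul_le_mul_of_nonneg_left hSlb hg0) hg1
  have hfinal := (le_div_iff₀ hXpos).mpr hg2
  calc σ n - σ (n+1) ≤ 1 / (D₁ * (Real.exp (-4) * δ^(-(r+2)))) := hfinal
    _ = Real.exp 4 / D₁ * δ^(r+2) := by
        rw [Real.rpow_neg hδpos.le, Real.exp_neg]
        field_simp
end
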